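/- Fix ℓ ≥ 1, ζ > 0 and k ≥ 1, and let (P_j^{(ℓ)}) and (P_j^{(ℓ−1)}) be orthonormal families for ω^{(ℓ)}(·;ζ) and ω^{(ℓ−1)}(·;ζ). Then P_k^{(ℓ)} has exactly k simple real zeros x₁ < x₂ < ⋯ < x_k, all lying in (1,∞), P_{k+1}^{(ℓ−1)} has exactly k+1 simple real zeros y₁ < y₂ < ⋯ < y_{k+1}, all lying in (1,∞), and the two sets of zeros strictly interlace: 1 < y₁ < x₁ < y₂ < x₂ < ⋯ < x_k < y_{k+1}. -/

import Mathlib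

open MeasureTheory Polynomial

open Filter Set


/-! ### Analytic helper lemmas -/

lemma exists_bound_of_tendsto {f : ℝ → ℝ} (a : ℝ) (hf : Continuous f)
    (h : Tendsto f atTop (nhds 0)) : ∃ M : ℝ, ∀ x, a ≤ x → f x ≤ M := by
  have h1 : f ⁻¹' (Set.Iio 1) ∈ atTop := h (Iio_mem_nhds one_pos)
  rw [Filter.mem_atTop_sets] at h1
  obtain ⟨b, hb⟩ := h1
  have hac : a ≤ max a b := le_max_left _ _
  obtain ⟨x₀, _, hx₀⟩ := isCompact_Icc.exists_isMaxOn (⟨a, le_refl a, hac⟩ :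
      (Set.Icc a (max a b)).Nonempty) hf.continuousOn
  refine ⟨max (f x₀) 1, fun x hx => ?_⟩
  by_cases hxc : x ≤ max a b
  · exact le_max_of_le_left (hx₀ ⟨hx, hxc⟩)
  · refine le_max_of_le_right ?_
    have : x ∈ f ⁻¹' Set.Iio 1 := hb x ((le_max_right a b).trans (le_of_not_ge hxc))
    exact le_of_lt this

lemma tendsto_pow_mul_exp_neg (n : ℕ) {c : ℝ} (hc : 0 < c) :
    Tendsto (fun x => x ^ n * Real.exp (-(c * x))) atTop (nhds 0) := by
  have h1 := Real.tendsto_pow_mul_exp_neg_atTop_nhds_zero n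
  have h2 : Tendsto (fun x => c * x) atTop atTop :=
    Filter.tendsto_id.const_mul_atTop hc
  have h3 := (h1.comp h2).const_mul ((c⁻¹) ^ n)
  rw [mul_zero] at h3
  refine h3.congr fun x => ?_
  simp only [Function.comp_apply]
  rw [mul_pow, inv_pow, mul_assoc (c ^ n), inv_mul_cancel_left₀ (pow_ne_zero n hc.ne')]

lemma poly_abs_bound (p : ℝ[X]) : ∃ C : ℝ, ∀ x : ℝ, 1 ≤ x →
    |p.eval x| ≤ C * x ^ p.natDegree := by
  refine ⟨∑ i ∈ Finset.range (p.natDegree + 1), |p.coeff i|, fun x hx => ?_⟩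
  have hx0 : (0:ℝ) ≤ x := le_trans zero_le_one hx
  rw [Polynomial.eval_eq_sum_range, Finset.sum_mul]
  refine (Finset.abs_sum_le_sum_abs _ _).trans (Finset.sum_le_sum fun i hi => ?_)
  rw [abs_mul, abs_pow, abs_of_nonneg hx0]
  have hineq : x ^ i ≤ x ^ p.natDegree := by
    apply pow_le_pow_right₀ hx
    exact Nat.lt_succ_iff.mp (Finset.mem_range.mp hi)
  exact mul_le_mul_of_nonneg_left hineq (abs_nonneg _)

/-- `K₂(ζ) = ∫₀^∞ cosh(2t)·exp(−ζ·cosh t) dt`. -/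
noncomputable def K2 (ζ : ℝ) : ℝ :=
  ∫ t in Set.Ioi (0 : ℝ), Real.cosh (2 * t) * Real.exp (-ζ * Real.cosh t)

/-- The weight `ω^{(ℓ)}(x;ζ) = ζ·(x²−1)^{ℓ+1/2}·exp(−ζx)/((2ℓ+1)·K₂(ζ))` on `[1,∞)`. -/
noncomputable def wgt (l : ℕ) (ζ : ℝ) (x : ℝ) : ℝ :=
  ζ * (x ^ 2 - 1) ^ ((l : ℝ) + 1 / 2) * Real.exp (-ζ * x) / ((2 * (l : ℝ) + 1) * K2 ζ)

lemma K2_integrableOn {ζ : ℝ} (hζ : 0 < ζ) :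
    IntegrableOn (fun t => Real.cosh (2 * t) * Real.exp (-ζ * Real.cosh t)) (Set.Ioi 0) := by
  have hH : Tendsto (fun t => Real.exp (3 * t) * Real.exp (-(ζ/2 * Real.exp t)))
      atTop (nhds 0) := by
    have h1 := (tendsto_pow_mul_exp_neg 3 (half_pos hζ)).comp Real.tendsto_exp_atTop
    refine h1.congr fun t => ?_
    simp only [Function.comp_apply]
    rw [← Real.exp_nat_mul]
    norm_num
  have hcont : Continuous fun t => Real.exp (3 * t) * Real.exp (-(ζ/2 * Real.exp t)) := by
    fun_prop
  obtain ⟨M, hM⟩ := exists_bound_of_tendsto 0 hcont hH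
  apply Integrable.mono' ((exp_neg_integrableOn_Ioi 0 one_pos).const_mul M)
  · exact (((Real.continuous_cosh).comp (continuous_const.mul continuous_id)).mul
      (Real.continuous_exp.comp (continuous_const.mul Real.continuous_cosh))).aestronglyMeasurable
  · filter_upwards [ae_restrict_mem measurableSet_Ioi] with t ht
    have ht0 : (0:ℝ) ≤ t := le_of_lt ht
    have hch2 : Real.cosh (2*t) ≤ Real.exp (2*t) := by
      rw [Real.cosh_eq]
      have : Real.exp (-(2*t)) ≤ Real.exp (2*t) := by
        apply Real.exp_le_exp.mpr; linarith
      linarith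
    have hch : Real.exp t / 2 ≤ Real.cosh t := by
      rw [Real.cosh_eq]
      have : 0 < Real.exp (-t) := Real.exp_pos _
      linarith
    have hexp : Real.exp (-ζ * Real.cosh t) ≤ Real.exp (-(ζ/2 * Real.exp t)) := by
      apply Real.exp_le_exp.mpr
      have : ζ * (Real.exp t / 2) ≤ ζ * Real.cosh t := by
        apply mul_le_mul_of_nonneg_left hch hζ.le
      nlinarith
    have hnn : (0:ℝ) ≤ Real.cosh (2*t) := (Real.cosh_pos _).le
    have key : Real.cosh (2*t) * Real.exp (-ζ * Real.cosh t)
        ≤ (Real.exp (3*t) * Real.exp (-(ζ/2 * Real.exp t))) * Real.exp (-1 * t) := by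
      have h2 : Real.exp (2*t) = Real.exp (3*t) * Real.exp (-1*t) := by
        rw [← Real.exp_add]; ring_nf
      calc Real.cosh (2*t) * Real.exp (-ζ * Real.cosh t)
          ≤ Real.exp (2*t) * Real.exp (-(ζ/2 * Real.exp t)) := by
            apply mul_le_mul hch2 hexp (Real.exp_pos _).le (Real.exp_pos _).le
        _ = (Real.exp (3*t) * Real.exp (-(ζ/2 * Real.exp t))) * Real.exp (-1*t) := by
            rw [h2]; ring
    rw [Real.norm_eq_abs, abs_of_nonneg (by positivity)]
    refine key.trans ?_
    apply mul_le_mul_of_nonneg_right (hM t ht0) (Real.exp_pos _).le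

lemma K2_pos {ζ : ℝ} (hζ : 0 < ζ) : 0 < K2 ζ := by
  rw [K2]
  rw [setIntegral_pos_iff_support_of_nonneg_ae]
  · refine lt_of_lt_of_le ?_ (measure_mono (fun t (ht : t ∈ Set.Ioi (0:ℝ)) => ?_))
    · rw [Real.volume_Ioi]; simp
    · refine ⟨?_, ht⟩
      have : 0 < Real.cosh (2*t) * Real.exp (-ζ * Real.cosh t) :=
        mul_pos (Real.cosh_pos _) (Real.exp_pos _)
      exact this.ne'
  · exact Filter.Eventually.of_forall fun t =>
      (mul_pos (Real.cosh_pos _) (Real.exp_pos _)).le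
  · exact K2_integrableOn hζ

lemma wgt_continuous (l : ℕ) (ζ : ℝ) : Continuous (wgt l ζ) := by
  unfold wgt
  apply Continuous.div_const
  refine (continuous_const.mul (((continuous_pow 2).sub continuous_const).rpow_const
      fun x => Or.inr (by positivity))).mul ?_
  exact Real.continuous_exp.comp (continuous_const.mul continuous_id)

lemma wgt_pos {l : ℕ} {ζ : ℝ} (hζ : 0 < ζ) {x : ℝ} (hx : 1 < x) : 0 < wgt l ζ x := by
  unfold wgt
  apply div_pos
  · refine mul_pos (mul_pos hζ (Real.rpow_pos_of_pos (by nlinarith) _)) (Real.exp_pos _)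
  · exact mul_pos (by positivity) (K2_pos hζ)

lemma rpow_le_pow_aux {l : ℕ} {x : ℝ} (hx : 1 < x) :
    (x ^ 2 - 1) ^ ((l : ℝ) + 1 / 2) ≤ x ^ (2 * l + 1) := by
  have hx0 : (0:ℝ) < x := lt_trans one_pos hx
  have h1 : (x ^ 2 - 1) ^ ((l : ℝ) + 1 / 2) ≤ (x ^ 2) ^ ((l : ℝ) + 1 / 2) :=
    Real.rpow_le_rpow (by nlinarith) (by nlinarith) (by positivity)
  refine h1.trans_eq ?_
  have e1 : ((2 * l + 1 : ℕ) : ℝ) = 2 * ((l : ℝ) + 1 / 2) := by push_cast; ring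
  have e2 : x ^ (2:ℝ) = x ^ (2:ℕ) := by
    rw [← Real.rpow_natCast x 2]; norm_num
  rw [← Real.rpow_natCast x (2 * l + 1), e1, Real.rpow_mul hx0.le, e2]

lemma integrableOn_poly_mul_wgt (l : ℕ) {ζ : ℝ} (hζ : 0 < ζ) (p : Polynomial ℝ) :
    IntegrableOn (fun x => p.eval x * wgt l ζ x) (Set.Ioi 1) := by
  obtain ⟨Cp, hCp⟩ := poly_abs_bound p
  set D : ℝ := (2 * (l : ℝ) + 1) * K2 ζ with hD
  set n : ℕ := p.natDegree + (2 * l + 1) with hn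
  have htd : Tendsto (fun x => (|ζ / D| * Cp) * (x ^ n * Real.exp (-(ζ/2 * x))))
      atTop (nhds 0) := by
    simpa using (tendsto_pow_mul_exp_neg n (half_pos hζ)).const_mul (|ζ / D| * Cp)
  have hcont : Continuous fun x => (|ζ / D| * Cp) * (x ^ n * Real.exp (-(ζ/2 * x))) := by
    fun_prop
  obtain ⟨M, hM⟩ := exists_bound_of_tendsto 1 hcont htd
  apply Integrable.mono' ((exp_neg_integrableOn_Ioi 1 (half_pos hζ)).const_mul M)
  · exact (p.continuous.mul (wgt_continuous l ζ)).aestronglyMeasurable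
  · filter_upwards [ae_restrict_mem measurableSet_Ioi] with x hx
    have hx1 : (1:ℝ) < x := hx
    have hx1' : (1:ℝ) ≤ x := hx1.le
    have hx0 : (0:ℝ) < x := lt_trans one_pos hx1
    have hb : (0:ℝ) ≤ x ^ 2 - 1 := by nlinarith
    have hwgt_eq : wgt l ζ x
        = (ζ / D) * ((x ^ 2 - 1) ^ ((l : ℝ) + 1 / 2) * Real.exp (-ζ * x)) := by
      unfold wgt; rw [← hD]; ring
    have hsplit : Real.exp (-ζ * x) = Real.exp (-(ζ/2 * x)) * Real.exp (-(ζ/2 * x)) := by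
      rw [← Real.exp_add]; ring_nf
    rw [Real.norm_eq_abs, abs_mul, hwgt_eq, abs_mul,
        abs_of_nonneg (by positivity : (0:ℝ) ≤ (x ^ 2 - 1) ^ ((l : ℝ) + 1 / 2)
          * Real.exp (-ζ * x))]
    calc |p.eval x| * (|ζ / D| * ((x ^ 2 - 1) ^ ((l : ℝ) + 1 / 2) * Real.exp (-ζ * x)))
        ≤ (Cp * x ^ p.natDegree) * (|ζ / D| * (x ^ (2*l+1) * Real.exp (-ζ * x))) := by
          have h1 := hCp x hx1'
          have h2 := rpow_le_pow_aux (l := l) hx1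
          have hpe : (0:ℝ) ≤ |p.eval x| := abs_nonneg _
          gcongr
          exact (abs_nonneg _).trans h1
      _ = ((|ζ / D| * Cp) * (x ^ n * Real.exp (-(ζ/2 * x)))) * Real.exp (-(ζ/2 * x)) := by
          rw [hn, pow_add, hsplit]; ring
      _ ≤ M * Real.exp (-(ζ/2) * x) := by
          have h5 := mul_le_mul_of_nonneg_right (hM x hx1') (Real.exp_pos (-(ζ/2 * x))).le
          refine h5.trans_eq ?_
          ring_nf

lemma integral_poly_mul_wgt_pos (l : ℕ) {ζ : ℝ} (hζ : 0 < ζ) {p : Polynomial ℝ}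
    (hp : p ≠ 0) (hnn : ∀ x : ℝ, 1 < x → 0 ≤ p.eval x) :
    0 < ∫ x in Set.Ioi (1:ℝ), p.eval x * wgt l ζ x := by
  rw [setIntegral_pos_iff_support_of_nonneg_ae]
  · have hroots : volume {x : ℝ | p.IsRoot x} = 0 :=
      (p.finite_setOf_isRoot hp).measure_zero volume
    refine lt_of_lt_of_le ?_ (measure_mono (?_ :
        Set.Ioi 1 \ {x : ℝ | p.IsRoot x} ⊆ Function.support (fun x => p.eval x * wgt l ζ x) ∩ Set.Ioi 1))
    · rw [measure_diff_null hroots, Real.volume_Ioi]; simp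
    · rintro x ⟨hx1, hxr⟩
      refine ⟨mul_ne_zero (fun h => hxr h) (wgt_pos hζ hx1).ne', hx1⟩
  · filter_upwards [ae_restrict_mem measurableSet_Ioi] with x hx
    exact mul_nonneg (hnn x hx) (wgt_pos hζ hx).le
  · exact integrableOn_poly_mul_wgt l hζ p

/-! ### The integral functional `J` -/

noncomputable def J (w : ℝ → ℝ) (p : Polynomial ℝ) : ℝ :=
  ∫ x in Set.Ioi (1:ℝ), p.eval x * w x

section Jlemmas

variable {w : ℝ → ℝ}
  (hint : ∀ p : Polynomial ℝ, IntegrableOn (fun x => p.eval x * w x) (Set.Ioi 1))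

lemma J_zero : J w 0 = 0 := by simp [J]

lemma J_neg (p : Polynomial ℝ) : J w (-p) = - J w p := by
  rw [J, J, ← integral_neg]
  congr 1; funext x; simp

include hint in
lemma J_add (p q : Polynomial ℝ) : J w (p + q) = J w p + J w q := by
  rw [J, J, J, ← integral_add (hint p) (hint q)]
  congr 1; funext x; simp [add_mul]

lemma J_Cmul (c : ℝ) (p : Polynomial ℝ) : J w (Polynomial.C c * p) = c * J w p := by
  rw [J, J, ← integral_const_mul]
  congr 1; funext x; simp [mul_assoc]

include hint in
lemma J_sub (p q : Polynomial ℝ) : J w (p - q) = J w p - J w q := by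
  have h := J_add hint p (-q)
  rw [J_neg] at h
  simpa [sub_eq_add_neg] using h

include hint in
lemma J_sum {ι : Type*} (s : Finset ι) (f : ι → Polynomial ℝ) :
    J w (∑ i ∈ s, f i) = ∑ i ∈ s, J w (f i) := by
  classical
  induction s using Finset.induction_on with
  | empty => simp [J_zero]
  | insert _ _ hni ih =>
      rw [Finset.sum_insert hni, J_add hint, ih, Finset.sum_insert hni]

end Jlemmas

/-! ### Orthogonality against all lower-degree polynomials -/

lemma ortho_lower {w : ℝ → ℝ}
    (hint : ∀ p : Polynomial ℝ, IntegrableOn (fun x => p.eval x * w x) (Set.Ioi 1))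
    {P : ℕ → Polynomial ℝ} (hdeg : ∀ j : ℕ, (P j).degree = j)
    (hlc : ∀ j : ℕ, 0 < (P j).leadingCoeff)
    (horm : ∀ i j : ℕ, (∫ x in Set.Ioi (1:ℝ), (P i).eval x * (P j).eval x * w x)
      = if i = j then 1 else 0)
    (n : ℕ) :
    ∀ (d : ℕ) (q : Polynomial ℝ), q.natDegree ≤ d → q.natDegree < n → J w (P n * q) = 0 := by
  have hJP : ∀ i j : ℕ, i ≠ j → J w (P i * P j) = 0 := by
    intro i j hij
    have h := horm i j
    rw [if_neg hij] at h
    rw [J, ← h]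
    congr 1; funext x; simp [mul_assoc]
  intro d
  induction d using Nat.strong_induction_on with
  | _ d ih =>
    intro q hqd hqn
    by_cases hq0 : q = 0
    · simp [hq0, J_zero]
    · set dq := q.natDegree with hdq
      set c : ℝ := q.leadingCoeff / (P dq).leadingCoeff with hc
      have hlcP : (P dq).leadingCoeff ≠ 0 := (hlc dq).ne'
      have hlcq : q.leadingCoeff ≠ 0 := leadingCoeff_ne_zero.mpr hq0
      have hcne : c ≠ 0 := div_ne_zero hlcq hlcP
      have hPdq0 : P dq ≠ 0 := fun h => by simp [h] at hlcP
      have hdegC : (Polynomial.C c * P dq).degree = q.degree := by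
        rw [degree_C_mul hcne, hdeg dq, hdq, degree_eq_natDegree hq0]
      have hlcC : (Polynomial.C c * P dq).leadingCoeff = q.leadingCoeff := by
        rw [leadingCoeff_mul, leadingCoeff_C, hc, div_mul_cancel₀ _ hlcP]
      set q' : Polynomial ℝ := q - Polynomial.C c * P dq with hq'
      have hsplit : q = q' + Polynomial.C c * P dq := by rw [hq']; ring
      have hJ1 : J w (P n * q) = J w (P n * q') + c * J w (P n * P dq) := by
        conv_lhs => rw [hsplit]
        rw [mul_add, J_add hint, show P n * (Polynomial.C c * P dq)
          = Polynomial.C c * (P n * P dq) by ring, J_Cmul]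
      have hJ2 : J w (P n * P dq) = 0 := hJP n dq (by omega)
      have hJ3 : J w (P n * q') = 0 := by
        by_cases hq'0 : q' = 0
        · simp [hq'0, J_zero]
        · have hdeglt : q'.degree < q.degree := by
            rw [hq']
            exact degree_sub_lt hdegC.symm hq0 hlcC.symm
          have hndlt : q'.natDegree < dq := by
            rw [hdq]
            exact natDegree_lt_natDegree hq'0 hdeglt
          exact ih q'.natDegree (lt_of_lt_of_le hndlt hqd) q' (le_refl _)
            (lt_trans hndlt hqn)
      rw [hJ1, hJ2, hJ3]; ring

/-! ### A polynomial whose roots beyond 1 all have even multiplicity has constant sign there -/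

lemma sign_const_of_even_mult :
    ∀ (N : ℕ) (f : Polynomial ℝ), f.natDegree ≤ N →
    (∀ r : ℝ, 1 < r → f.IsRoot r → Even (f.rootMultiplicity r)) →
    (∀ x : ℝ, 1 < x → 0 ≤ f.eval x) ∨ (∀ x : ℝ, 1 < x → f.eval x ≤ 0) := by
  intro N
  induction N using Nat.strong_induction_on with
  | _ N ih =>
    intro f hfN hev
    by_cases hf0 : f = 0
    · left; intro x _; simp [hf0]
    by_cases hroot : ∃ r : ℝ, 1 < r ∧ f.IsRoot r
    · obtain ⟨c, hc1, hcr⟩ := hroot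
      set m := f.rootMultiplicity c with hm
      have hmev : Even m := hev c hc1 hcr
      have hmpos : 0 < m := (rootMultiplicity_pos hf0).mpr hcr
      set g := f /ₘ (Polynomial.X - Polynomial.C c) ^ m with hg
      have hfac : f = (Polynomial.X - Polynomial.C c) ^ m * g := by
        rw [hg, hm]
        exact (f.pow_mul_divByMonic_rootMultiplicity_eq c).symm
      have hg0 : g ≠ 0 := by
        intro h; rw [h, mul_zero] at hfac; exact hf0 hfac
      have hgnr : ¬ g.IsRoot c := by
        rw [hg]
        exact eval_divByMonic_pow_rootMultiplicity_ne_zero c hf0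
      have hXc : ((Polynomial.X - Polynomial.C c) ^ m : Polynomial ℝ) ≠ 0 :=
        pow_ne_zero _ (X_sub_C_ne_zero c)
      have hdegg : g.natDegree < N := by
        have h1 : f.natDegree = m + g.natDegree := by
          conv_lhs => rw [hfac]
          rw [natDegree_mul hXc hg0, natDegree_pow, natDegree_X_sub_C, mul_one]
        omega
      have hgev : ∀ r : ℝ, 1 < r → g.IsRoot r → Even (g.rootMultiplicity r) := by
        intro r hr hgr
        have hrc : r ≠ c := fun h => hgnr (h ▸ hgr)
        have := hev r hr (by
          rw [hfac]; unfold Polynomial.IsRoot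
          rw [eval_mul]; exact mul_eq_zero_of_right _ hgr)
        rw [hfac, rootMultiplicity_mul (hfac ▸ hf0)] at this
        have hXr : ((Polynomial.X - Polynomial.C c) ^ m).rootMultiplicity r = 0 := by
          apply rootMultiplicity_eq_zero
          simp only [Polynomial.IsRoot, eval_pow, eval_sub, eval_X, eval_C]
          exact fun h => hrc (by
            have := pow_eq_zero_iff (n := m) hmpos.ne' |>.mp h
            linarith [sub_eq_zero.mp this])
        rwa [hXr, zero_add] at this
      have hsign := ih g.natDegree hdegg g (le_refl _) hgev
      have heval : ∀ x : ℝ, f.eval x = (x - c) ^ m * g.eval x := by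
        intro x; conv_lhs => rw [hfac]
        simp [eval_pow]
      cases hsign with
      | inl h => left; intro x hx; rw [heval]
                 exact mul_nonneg (hmev.pow_nonneg _) (h x hx)
      | inr h => right; intro x hx; rw [heval]
                 exact mul_nonpos_of_nonneg_of_nonpos (hmev.pow_nonneg _) (h x hx)
    · push_neg at hroot
      by_contra hcon
      push_neg at hcon
      obtain ⟨⟨a, ha1, ha⟩, ⟨b, hb1, hb⟩⟩ := hcon
      have hab : a ≠ b := by
        intro h; rw [h] at ha; linarith
      have hcont : ∀ u v : ℝ, u ≤ v → ContinuousOn (fun x => f.eval x) (Set.Icc u v) :=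
        fun u v _ => f.continuous.continuousOn
      rcases lt_or_gt_of_ne hab with h | h
      · have := intermediate_value_Ioo h.le (hcont a b h.le)
        have h0 : (0:ℝ) ∈ Set.Ioo (f.eval a) (f.eval b) := ⟨ha, hb⟩
        obtain ⟨z, hz, hfz⟩ := this h0
        exact hroot z (lt_trans ha1 hz.1) hfz
      · have := intermediate_value_Ioo' h.le (hcont b a h.le)
        have h0 : (0:ℝ) ∈ Set.Ioo (f.eval a) (f.eval b) := ⟨ha, hb⟩
        obtain ⟨z, hz, hfz⟩ := this h0
        exact hroot z (lt_trans hb1 hz.1) hfz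

/-! ### Zeros of orthogonal polynomials -/

lemma partB {w : ℝ → ℝ}
    (hint : ∀ p : Polynomial ℝ, IntegrableOn (fun x => p.eval x * w x) (Set.Ioi 1))
    (hpos : ∀ p : Polynomial ℝ, p ≠ 0 → (∀ x : ℝ, 1 < x → 0 ≤ p.eval x) → 0 < J w p)
    {f : Polynomial ℝ} {n : ℕ} (hf0 : f ≠ 0) (hdeg : f.natDegree = n)
    (horth : ∀ q : Polynomial ℝ, q.natDegree < n → J w (f * q) = 0) :
    ∃ x : Fin n → ℝ, StrictMono x ∧ (∀ i, 1 < x i) ∧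
      f = Polynomial.C f.leadingCoeff * ∏ i : Fin n, (Polynomial.X - Polynomial.C (x i)) := by
  classical
  set R := f.roots with hR
  set T := R.toFinset.filter (fun r => 1 < r ∧ Odd (f.rootMultiplicity r)) with hT
  set t := ∏ r ∈ T, (Polynomial.X - Polynomial.C r) with ht
  have ht_nodal : t = Lagrange.nodal T id := by
    rw [ht, Lagrange.nodal]; rfl
  have ht0 : t ≠ 0 := by rw [ht_nodal]; exact Lagrange.nodal_ne_zero
  have htdeg : t.natDegree = T.card := by rw [ht_nodal, Lagrange.natDegree_nodal]
  have htroots : t.roots = T.val := by rw [ht]; exact roots_prod_X_sub_C T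
  have hft0 : f * t ≠ 0 := mul_ne_zero hf0 ht0
  -- multiplicity of roots of f*t beyond 1 is even
  have hev : ∀ r : ℝ, 1 < r → (f * t).IsRoot r → Even ((f * t).rootMultiplicity r) := by
    intro r hr _
    rw [rootMultiplicity_mul hft0]
    have htr : t.rootMultiplicity r = if r ∈ T then 1 else 0 := by
      rw [← count_roots, htroots]
      by_cases h : r ∈ T
      · rw [if_pos h]
        exact Multiset.count_eq_one_of_mem T.nodup h
      · rw [if_neg h]
        exact Multiset.count_eq_zero_of_notMem h
    by_cases hfr : f.IsRoot r
    · have hrR : r ∈ R.toFinset := by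
        rw [Multiset.mem_toFinset, hR, mem_roots hf0]; exact hfr
      by_cases hodd : Odd (f.rootMultiplicity r)
      · have hrT : r ∈ T := by rw [hT, Finset.mem_filter]; exact ⟨hrR, hr, hodd⟩
        rw [htr, if_pos hrT]
        exact hodd.add_one
      · have hrT : r ∉ T := by
          rw [hT, Finset.mem_filter]; rintro ⟨-, -, h⟩; exact hodd h
        rw [htr, if_neg hrT, add_zero]
        exact Nat.not_odd_iff_even.mp hodd
    · have h1 : f.rootMultiplicity r = 0 := rootMultiplicity_eq_zero hfr
      have hrT : r ∉ T := by
        rw [hT, Finset.mem_filter]; rintro ⟨hrR, -, -⟩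
        rw [Multiset.mem_toFinset, hR, mem_roots hf0] at hrR
        exact hfr hrR
      rw [h1, htr, if_neg hrT]
      simp
  -- f*t has constant sign on (1,∞), hence J w (f*t) ≠ 0
  have hJne : J w (f * t) ≠ 0 := by
    have hsign := sign_const_of_even_mult (f * t).natDegree (f * t) (le_refl _) hev
    cases hsign with
    | inl h =>
        have := hpos (f * t) hft0 (fun x hx => by
          have := h x hx; rwa [eval_mul] at this ⊢)
        exact this.ne'
    | inr h =>
        have := hpos (-(f * t)) (neg_ne_zero.mpr hft0) (fun x hx => by
          have := h x hx; rw [eval_neg]; linarith [this])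
        rw [J_neg] at this
        intro hc; rw [hc] at this; simp at this
  -- counting
  have hcard_chain : T.card ≤ R.toFinset.card ∧ R.toFinset.card ≤ Multiset.card R ∧
      Multiset.card R ≤ n := by
    refine ⟨Finset.card_le_card (Finset.filter_subset _ _), Multiset.toFinset_card_le R, ?_⟩
    rw [hR, ← hdeg]; exact f.card_roots'
  have hTn : n ≤ T.card := by
    by_contra hlt
    push_neg at hlt
    have := horth t (by rw [htdeg]; exact hlt)
    exact hJne this
  have hTcard : T.card = n := le_antisymm (by omega) hTn
  have hRcard : Multiset.card R = n := by omega
  have hRfin : R.toFinset.card = Multiset.card R := by omega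
  have hnodup : R.Nodup := Multiset.toFinset_card_eq_card_iff_nodup.mp hRfin
  have hTeq : T = R.toFinset := by
    have hsub : T ⊆ R.toFinset := by rw [hT]; exact Finset.filter_subset _ _
    exact Finset.eq_of_subset_of_card_le hsub (by omega)
  have hfac : f = Polynomial.C f.leadingCoeff * (R.map fun a => Polynomial.X - Polynomial.C a).prod := by
    rw [hR]
    exact (C_leadingCoeff_mul_prod_multiset_X_sub_C (by rw [← hR, hRcard, hdeg])).symm
  have hTval : T.val = R := by
    rw [hTeq, Multiset.toFinset_val, Multiset.dedup_eq_self.mpr hnodup]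
  -- the sorted roots
  set xf : Fin n → ℝ := fun i => ((T.orderIsoOfFin hTcard i : T) : ℝ) with hxf
  have hmono : StrictMono xf := by
    intro i j hij
    exact (T.orderIsoOfFin hTcard).strictMono hij
  have hgt1 : ∀ i, 1 < xf i := by
    intro i
    have hmem : (xf i) ∈ T := (T.orderIsoOfFin hTcard i).2
    rw [hT, Finset.mem_filter] at hmem
    exact hmem.2.1
  refine ⟨xf, hmono, hgt1, ?_⟩
  have hprod : (∏ i : Fin n, (Polynomial.X - Polynomial.C (xf i)))
      = (R.map fun a => Polynomial.X - Polynomial.C a).prod := by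
    have h1 : (R.map fun a => Polynomial.X - Polynomial.C a).prod
        = ∏ r ∈ T, (Polynomial.X - Polynomial.C r) := by
      rw [Finset.prod_eq_multiset_prod, hTval]
    rw [h1, ← Finset.prod_coe_sort T (fun r => Polynomial.X - Polynomial.C r)]
    exact Fintype.prod_equiv (T.orderIsoOfFin hTcard).toEquiv
      (fun i => Polynomial.X - Polynomial.C (xf i))
      (fun r => Polynomial.X - Polynomial.C (r : ℝ)) (fun i => rfl)
  rw [hprod]
  exact hfac

/-! ### Sign alternation of `p` at the zeros of `q` -/

set_option maxHeartbeats 1000000 in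
lemma partC_sign {w1 w2 : ℝ → ℝ} {c : ℝ} (hc : 0 < c)
    (hrel : ∀ x : ℝ, 1 < x → w1 x = c * ((x ^ 2 - 1) * w2 x))
    (hint1 : ∀ p : Polynomial ℝ, IntegrableOn (fun x => p.eval x * w1 x) (Set.Ioi 1))
    (hint2 : ∀ p : Polynomial ℝ, IntegrableOn (fun x => p.eval x * w2 x) (Set.Ioi 1))
    (hpos2 : ∀ p : Polynomial ℝ, p ≠ 0 → (∀ x : ℝ, 1 < x → 0 ≤ p.eval x) → 0 < J w2 p)
    {k : ℕ} {p q : Polynomial ℝ} (hpdeg : p.natDegree ≤ k)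
    (horthp : ∀ g : Polynomial ℝ, g.natDegree < k → J w1 (p * g) = 0)
    (horthq : ∀ g : Polynomial ℝ, g.natDegree < k + 1 → J w2 (q * g) = 0)
    {y : Fin (k + 1) → ℝ} (hy : StrictMono y) (hy1 : ∀ i, 1 < y i)
    (hqlc0 : q.leadingCoeff ≠ 0)
    (hq : q = Polynomial.C q.leadingCoeff * ∏ i : Fin (k + 1), (Polynomial.X - Polynomial.C (y i)))
    (m : Fin k) :
    p.eval (y m.castSucc) * p.eval (y m.succ) < 0 ∨
      (p.eval (y m.castSucc) = 0 ∧ p.eval (y m.succ) = 0) := by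
  classical
  have hk0 : 0 < k := m.pos
  set s : Finset (Fin (k + 1)) := Finset.univ with hs
  have hvs : Set.InjOn y ↑s := fun i _ j _ h => hy.injective h
  have hscard : s.card = k + 1 := by rw [hs, Finset.card_univ, Fintype.card_fin]
  set W : Polynomial ℝ := Lagrange.nodal s y with hW
  have hWmonic : W.Monic := Lagrange.nodal_monic
  have hWdeg : W.natDegree = k + 1 := by rw [hW, Lagrange.natDegree_nodal, hscard]
  have hWdeg' : W.degree = (k + 1 : ℕ) := by rw [hW, Lagrange.degree_nodal, hscard]
  set lc : ℝ := q.leadingCoeff with hlcdef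
  have hqW : q = Polynomial.C lc * W := by
    conv_lhs => rw [hq]
    rw [hW, Lagrange.nodal_eq]
  -- orthogonality of W against degree ≤ k
  have hJW : ∀ h : Polynomial ℝ, h.natDegree ≤ k → J w2 (W * h) = 0 := by
    intro h hh
    have h1 : Polynomial.C lc⁻¹ * (q * h)
        = (Polynomial.C lc⁻¹ * Polynomial.C lc) * (W * h) := by
      conv_lhs => rw [hqW]
      ring
    rw [← Polynomial.C_mul, inv_mul_cancel₀ (hlcdef ▸ hqlc0), Polynomial.C_1, one_mul] at h1
    rw [← h1, J_Cmul, horthq h (by omega), mul_zero]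
  -- the Christoffel numbers are positive
  set lam : Fin (k + 1) → ℝ := fun i => J w2 (Lagrange.basis s y i) with hlam
  have hlampos : ∀ i, 0 < lam i := by
    intro i
    set B := Lagrange.basis s y i with hB
    have hBdeg : B.natDegree = k := by
      rw [hB, Lagrange.natDegree_basis hvs (Finset.mem_univ i), hscard]
      omega
    have hB0 : B ≠ 0 := Lagrange.basis_ne_zero hvs (Finset.mem_univ i)
    have hBeval : ∀ j : Fin (k + 1), (B ^ 2 - B).eval (y j) = 0 := by
      intro j
      by_cases hij : i = j
      · subst hij
        rw [Polynomial.eval_sub, Polynomial.eval_pow,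
          Lagrange.eval_basis_self hvs (Finset.mem_univ i)]
        norm_num
      · rw [Polynomial.eval_sub, Polynomial.eval_pow,
          Lagrange.eval_basis_of_ne hij (Finset.mem_univ j)]
        norm_num
    set r0 := (B ^ 2 - B) %ₘ W with hr0
    have hdecomp : B ^ 2 - B = r0 + W * ((B ^ 2 - B) /ₘ W) :=
      (modByMonic_add_div (B ^ 2 - B) W).symm
    have hr0deg : r0.degree < (s.card : WithBot ℕ) := by
      rw [hscard, ← hWdeg']
      exact degree_modByMonic_lt _ hWmonic
    have hr0eval : ∀ j ∈ s, r0.eval (y j) = 0 := by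
      intro j _
      have h1 := hBeval j
      rw [hdecomp, Polynomial.eval_add, Polynomial.eval_mul,
        Lagrange.eval_nodal_at_node (Finset.mem_univ j)] at h1
      simpa using h1
    have hr00 : r0 = 0 :=
      Polynomial.eq_zero_of_degree_lt_of_eval_index_eq_zero s hvs hr0deg hr0eval
    have hmul : B ^ 2 - B = W * ((B ^ 2 - B) /ₘ W) := by
      have h := hdecomp
      rw [hr00, zero_add] at h
      exact h
    have hdivdeg : ((B ^ 2 - B) /ₘ W).natDegree ≤ k := by
      by_cases hdiv0 : (B ^ 2 - B) /ₘ W = 0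
      · rw [hdiv0]; simp
      · have hne : B ^ 2 - B ≠ 0 := by
          rw [hmul]
          exact mul_ne_zero hWmonic.ne_zero hdiv0
        have h1 : (B ^ 2 - B).natDegree ≤ 2 * k := by
          refine (natDegree_sub_le _ _).trans ?_
          rw [natDegree_pow, hBdeg]
          omega
        have h2 : (B ^ 2 - B).natDegree = W.natDegree + ((B ^ 2 - B) /ₘ W).natDegree := by
          conv_lhs => rw [hmul]
          exact natDegree_mul hWmonic.ne_zero hdiv0
        omega
    have hJBB : J w2 (B ^ 2 - B) = 0 := by
      rw [hmul]; exact hJW _ hdivdeg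
    have hJB2 : 0 < J w2 (B ^ 2) := by
      refine hpos2 (B ^ 2) (pow_ne_zero 2 hB0) fun x _ => ?_
      rw [Polynomial.eval_pow]; exact sq_nonneg _
    have := J_sub hint2 (B ^ 2) B
    rw [hJBB] at this
    have hBB : J w2 B = J w2 (B ^ 2) := by linarith
    rw [hlam]
    simp only
    rw [← hB, hBB]
    exact hJB2
  -- the test polynomial g
  set a : Fin (k + 1) := m.castSucc with ha
  set b : Fin (k + 1) := m.succ with hb
  have hab : a < b := Fin.castSucc_lt_succ (i := m)
  set S : Finset (Fin (k + 1)) := Finset.univ \ {a, b} with hS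
  have hScard : S.card = k - 1 := by
    rw [hS, Finset.card_sdiff_of_subset (Finset.subset_univ _), Finset.card_univ, Fintype.card_fin]
    rw [Finset.card_insert_of_notMem (by simp [hab.ne]), Finset.card_singleton]
    omega
  set g : Polynomial ℝ := Lagrange.nodal S y with hg
  have hgdeg : g.natDegree = k - 1 := by rw [hg, Lagrange.natDegree_nodal, hScard]
  have hgdeg' : g.natDegree < k := by omega
  -- F and its orthogonality relation
  set F : Polynomial ℝ := p * g * (Polynomial.X ^ 2 - 1) with hF
  have hJF : J w2 F = 0 := by
    have hcongr : ∀ x ∈ Set.Ioi (1:ℝ),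
        F.eval x * w2 x = c⁻¹ * ((p * g).eval x * w1 x) := by
      intro x hx
      rw [hrel x hx, hF]
      simp only [Polynomial.eval_mul, Polynomial.eval_sub, Polynomial.eval_pow,
        Polynomial.eval_X, Polynomial.eval_one]
      field_simp
    rw [J, setIntegral_congr_fun measurableSet_Ioi hcongr, integral_const_mul,
      ← J, horthp g hgdeg', mul_zero]
  -- decompose F
  set r : Polynomial ℝ := F %ₘ W with hr
  set dv : Polynomial ℝ := F /ₘ W with hdv
  have hFdecomp : F = r + W * dv := (modByMonic_add_div F W).symm
  have hdvdeg : dv.natDegree ≤ k := by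
    have h1 : F.natDegree ≤ 2 * k + 1 := by
      refine (natDegree_mul_le).trans ?_
      have h2 : (p * g).natDegree ≤ k + (k - 1) := natDegree_mul_le.trans (by omega)
      have h3 : (Polynomial.X ^ 2 - 1 : Polynomial ℝ).natDegree ≤ 2 := by
        refine (natDegree_sub_le _ _).trans ?_
        simp [natDegree_X_pow]
      omega
    rw [hdv, natDegree_divByMonic F hWmonic, hWdeg]
    omega
  have hJr : J w2 r = 0 := by
    have h1 := J_add hint2 r (W * dv)
    rw [← hFdecomp, hJF, hJW dv hdvdeg] at h1
    linarith
  -- r is the interpolation polynomial of F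
  have hrdeg : r.degree < (s.card : WithBot ℕ) := by
    rw [hscard, ← hWdeg']
    exact degree_modByMonic_lt _ hWmonic
  have hreval : ∀ j ∈ s, r.eval (y j) = F.eval (y j) := by
    intro j _
    conv_rhs => rw [hFdecomp]
    rw [Polynomial.eval_add, Polynomial.eval_mul,
      Lagrange.eval_nodal_at_node (Finset.mem_univ j)]
    ring
  have hinterp : r = Lagrange.interpolate s y (fun j => F.eval (y j)) :=
    Lagrange.eq_interpolate_of_eval_eq (fun j => F.eval (y j)) hvs hrdeg hreval
  -- J w2 r as a sum
  have hJrsum : J w2 r = ∑ j ∈ s, F.eval (y j) * lam j := by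
    rw [hinterp, Lagrange.interpolate_apply, J_sum hint2]
    refine Finset.sum_congr rfl fun j _ => ?_
    rw [J_Cmul]
  -- all terms except a, b vanish
  have hFeval : ∀ j : Fin (k + 1), F.eval (y j)
      = p.eval (y j) * g.eval (y j) * ((y j) ^ 2 - 1) := by
    intro j; rw [hF]; simp
  have hgzero : ∀ j ∈ S, g.eval (y j) = 0 := by
    intro j hj
    rw [hg]; exact Lagrange.eval_nodal_at_node hj
  have hsum2 : ∑ j ∈ s, F.eval (y j) * lam j
      = ∑ j ∈ ({a, b} : Finset (Fin (k + 1))), F.eval (y j) * lam j := by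
    refine (Finset.sum_subset (Finset.subset_univ _) fun j _ hj => ?_).symm
    have hjS : j ∈ S := by rw [hS]; exact Finset.mem_sdiff.mpr ⟨Finset.mem_univ j, hj⟩
    rw [hFeval j, hgzero j hjS]
    ring
  have heq : p.eval (y a) * g.eval (y a) * ((y a) ^ 2 - 1) * lam a
      + p.eval (y b) * g.eval (y b) * ((y b) ^ 2 - 1) * lam b = 0 := by
    rw [← hFeval a, ← hFeval b]
    rw [hJrsum, hsum2, Finset.sum_pair hab.ne] at hJr
    linarith
  -- sign analysis
  have hEa : 0 < (y a) ^ 2 - 1 := by have := hy1 a; nlinarith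
  have hEb : 0 < (y b) ^ 2 - 1 := by have := hy1 b; nlinarith
  have hGG : 0 < g.eval (y a) * g.eval (y b) := by
    have h1 : g.eval (y a) * g.eval (y b)
        = ∏ i ∈ S, ((y a - y i) * (y b - y i)) := by
      rw [hg, Lagrange.eval_nodal, Lagrange.eval_nodal, ← Finset.prod_mul_distrib]
    rw [h1]
    refine Finset.prod_pos fun i hi => ?_
    rw [hS, Finset.mem_sdiff] at hi
    have hia : i ≠ a := fun h => hi.2 (by simp [h])
    have hib : i ≠ b := fun h => hi.2 (by simp [h])
    rcases lt_or_gt_of_ne hia with h | h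
    · have h2 : i < b := lt_trans h hab
      exact mul_pos (sub_pos.mpr (hy h)) (sub_pos.mpr (hy h2))
    · have h3 : b < i := by
        rcases lt_or_gt_of_ne hib with h' | h'
        · exfalso
          have h4 : a < i := h
          have h5 : (a : ℕ) < (i : ℕ) := h4
          have h6 : (i : ℕ) < (b : ℕ) := h'
          have h7 : (b : ℕ) = (a : ℕ) + 1 := by
            rw [ha, hb, Fin.coe_castSucc, Fin.val_succ]
          omega
        · exact h'
      have h2 : a < i := h
      exact mul_pos_of_neg_of_neg (sub_neg.mpr (hy h2)) (sub_neg.mpr (hy h3))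
  have hga : g.eval (y a) ≠ 0 := by
    intro h0; rw [h0, zero_mul] at hGG; exact lt_irrefl 0 hGG
  have hgb : g.eval (y b) ≠ 0 := by
    intro h0; rw [h0, mul_zero] at hGG; exact lt_irrefl 0 hGG
  by_cases hA : p.eval (y a) = 0
  · right
    refine ⟨hA, ?_⟩
    rw [hA] at heq
    have h1 : p.eval (y b) * (g.eval (y b) * (((y b) ^ 2 - 1) * lam b)) = 0 := by linarith
    rcases mul_eq_zero.mp h1 with h | h
    · exact h
    · exfalso
      rcases mul_eq_zero.mp h with h' | h'
      · exact hgb h'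
      · rcases mul_eq_zero.mp h' with h'' | h''
        · exact hEb.ne' h''
        · exact (hlampos b).ne' h''
  · left
    have h0 : p.eval (y a) * g.eval (y a) * ((y a) ^ 2 - 1) * lam a
        = -(p.eval (y b) * g.eval (y b) * ((y b) ^ 2 - 1) * lam b) := by linarith
    have h1 : (p.eval (y a) * p.eval (y b))
        * ((g.eval (y a) * g.eval (y b)) * ((((y a) ^ 2 - 1) * ((y b) ^ 2 - 1))
          * (lam a * lam b)))
        = (p.eval (y a) * g.eval (y a) * ((y a) ^ 2 - 1) * lam a)
          * (p.eval (y b) * g.eval (y b) * ((y b) ^ 2 - 1) * lam b) := by ring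
    rw [h0] at h1
    have hAne : p.eval (y a) * g.eval (y a) * ((y a) ^ 2 - 1) * lam a ≠ 0 :=
      mul_ne_zero (mul_ne_zero (mul_ne_zero hA hga) hEa.ne') (hlampos a).ne'
    have h2 : (p.eval (y a) * p.eval (y b))
        * ((g.eval (y a) * g.eval (y b)) * ((((y a) ^ 2 - 1) * ((y b) ^ 2 - 1))
          * (lam a * lam b))) < 0 := by
      rw [h1]
      have h3 : p.eval (y b) * g.eval (y b) * ((y b) ^ 2 - 1) * lam b ≠ 0 := by
        intro h; rw [h, neg_zero] at h0; exact hAne h0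
      have := mul_self_pos.mpr h3
      nlinarith
    have hpf : 0 < (g.eval (y a) * g.eval (y b)) * ((((y a) ^ 2 - 1) * ((y b) ^ 2 - 1))
        * (lam a * lam b)) :=
      mul_pos hGG (mul_pos (mul_pos hEa hEb) (mul_pos (hlampos a) (hlampos b)))
    by_contra hcon
    push_neg at hcon
    have := mul_nonneg hcon hpf.le
    linarith

/-! ### Relation between consecutive weights -/

lemma wgt_rel {l : ℕ} (hl : 1 ≤ l) {ζ : ℝ} (hζ : 0 < ζ) {x : ℝ} (hx : 1 < x) :
    wgt l ζ x = ((2 * (l:ℝ) - 1) / (2 * (l:ℝ) + 1)) * ((x ^ 2 - 1) * wgt (l - 1) ζ x) := by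
  have hK : K2 ζ ≠ 0 := (K2_pos hζ).ne'
  have hl1 : (1:ℝ) ≤ (l:ℝ) := by exact_mod_cast hl
  have hcast : ((l - 1 : ℕ) : ℝ) = (l:ℝ) - 1 := by
    rw [Nat.cast_sub hl, Nat.cast_one]
  have hb : (0:ℝ) < x ^ 2 - 1 := by nlinarith
  unfold wgt
  rw [hcast]
  have hsplit : (x ^ 2 - 1) ^ ((l:ℝ) + 1/2)
      = (x ^ 2 - 1) * (x ^ 2 - 1) ^ (((l:ℝ) - 1) + 1/2) := by
    rw [show (l:ℝ) + 1/2 = 1 + (((l:ℝ) - 1) + 1/2) by ring, Real.rpow_add hb,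
      Real.rpow_one]
  rw [hsplit]
  have hden1 : 2 * (l:ℝ) + 1 ≠ 0 := by linarith
  have hden2 : 2 * ((l:ℝ) - 1) + 1 ≠ 0 := by linarith
  have hden3 : 2 * (l:ℝ) - 1 ≠ 0 := by linarith
  field_simp
  rw [eq_div_iff (by linarith)]; ring

/-! ### The main theorem -/

/-- An orthonormal family for the weight `ω^{(ℓ)}(·;ζ)`: real polynomials `P k` of degree
exactly `k`, positive leading coefficients, orthonormal for the weighted inner product. -/
def IsOrthoFam (l : ℕ) (ζ : ℝ) (P : ℕ → Polynomial ℝ) : Prop :=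
  (∀ k : ℕ, (P k).degree = k) ∧ (∀ k : ℕ, 0 < (P k).leadingCoeff) ∧
  ∀ i k : ℕ, (∫ x in Set.Ioi (1 : ℝ), (P i).eval x * (P k).eval x * wgt l ζ x)
      = if i = k then 1 else 0

set_option maxHeartbeats 1000000 in
theorem stmt12 (l : ℕ) (hl : 1 ≤ l) (ζ : ℝ) (hζ : 0 < ζ)
    (P Q : ℕ → Polynomial ℝ)
    (hP : IsOrthoFam l ζ P) (hQ : IsOrthoFam (l - 1) ζ Q)
    (k : ℕ) (hk : 1 ≤ k) :
    ∃ x : Fin k → ℝ, ∃ y : Fin (k + 1) → ℝ,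
      StrictMono x ∧ StrictMono y ∧
      (∀ i, 1 < x i) ∧ (∀ i, 1 < y i) ∧
      -- `P_k^{(ℓ)}` has exactly `k` simple real zeros `x₁ < ⋯ < x_k`:
      P k = Polynomial.C (P k).leadingCoeff
              * ∏ i : Fin k, (Polynomial.X - Polynomial.C (x i)) ∧
      -- `P_{k+1}^{(ℓ−1)}` has exactly `k+1` simple real zeros `y₁ < ⋯ < y_{k+1}`:
      Q (k + 1) = Polynomial.C (Q (k + 1)).leadingCoeff
              * ∏ i : Fin (k + 1), (Polynomial.X - Polynomial.C (y i)) ∧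
      -- strict interlacing `1 < y₁ < x₁ < y₂ < ⋯ < x_k < y_{k+1}`:
      ∀ i : Fin k, y i.castSucc < x i ∧ x i < y i.succ := by
  classical
  obtain ⟨hPdeg, hPlc, hPorm⟩ := hP
  obtain ⟨hQdeg, hQlc, hQorm⟩ := hQ
  set w1 := wgt l ζ with hw1
  set w2 := wgt (l - 1) ζ with hw2
  have hint1 : ∀ p : Polynomial ℝ, IntegrableOn (fun x => p.eval x * w1 x) (Set.Ioi 1) :=
    fun p => integrableOn_poly_mul_wgt l hζ p
  have hint2 : ∀ p : Polynomial ℝ, IntegrableOn (fun x => p.eval x * w2 x) (Set.Ioi 1) :=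
    fun p => integrableOn_poly_mul_wgt (l - 1) hζ p
  have hpos1 : ∀ p : Polynomial ℝ, p ≠ 0 → (∀ x : ℝ, 1 < x → 0 ≤ p.eval x) → 0 < J w1 p :=
    fun p hp hnn => integral_poly_mul_wgt_pos l hζ hp hnn
  have hpos2 : ∀ p : Polynomial ℝ, p ≠ 0 → (∀ x : ℝ, 1 < x → 0 ≤ p.eval x) → 0 < J w2 p :=
    fun p hp hnn => integral_poly_mul_wgt_pos (l - 1) hζ hp hnn
  -- the polynomials p = P k, q = Q (k+1)
  have hp0 : P k ≠ 0 := leadingCoeff_ne_zero.mp (hPlc k).ne'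
  have hq0 : Q (k + 1) ≠ 0 := leadingCoeff_ne_zero.mp (hQlc (k + 1)).ne'
  have hPnat : (P k).natDegree = k := natDegree_eq_of_degree_eq_some (hPdeg k)
  have hQnat : (Q (k + 1)).natDegree = k + 1 := natDegree_eq_of_degree_eq_some (hQdeg (k + 1))
  have horthp : ∀ g : Polynomial ℝ, g.natDegree < k → J w1 (P k * g) = 0 :=
    fun g hg => ortho_lower hint1 hPdeg hPlc hPorm k g.natDegree g (le_refl _) hg
  have horthq : ∀ g : Polynomial ℝ, g.natDegree < k + 1 → J w2 (Q (k + 1) * g) = 0 :=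
    fun g hg => ortho_lower hint2 hQdeg hQlc hQorm (k + 1) g.natDegree g (le_refl _) hg
  obtain ⟨x, hxmono, hx1, hxfac⟩ := partB hint1 hpos1 hp0 hPnat horthp
  obtain ⟨y, hymono, hy1, hyfac⟩ := partB hint2 hpos2 hq0 hQnat horthq
  -- the weight relation
  have hl1 : (1:ℝ) ≤ (l:ℝ) := by exact_mod_cast hl
  have hc : 0 < (2 * (l:ℝ) - 1) / (2 * (l:ℝ) + 1) := by
    apply div_pos <;> linarith
  have hrel : ∀ x : ℝ, 1 < x →
      w1 x = ((2 * (l:ℝ) - 1) / (2 * (l:ℝ) + 1)) * ((x ^ 2 - 1) * w2 x) :=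
    fun x hx => wgt_rel hl hζ hx
  -- sign alternation
  have key := fun m : Fin k => partC_sign hc hrel hint1 hint2 hpos2 hPnat.le horthp horthq
    hymono hy1 ((hQlc (k + 1)).ne') hyfac m
  -- no zero of P k among the y's
  have hnz : ∀ i : Fin (k + 1), (P k).eval (y i) ≠ 0 := by
    by_contra hcon
    push_neg at hcon
    obtain ⟨i0, hi0⟩ := hcon
    have hiff : ∀ m : Fin k,
        ((P k).eval (y m.castSucc) = 0 ↔ (P k).eval (y m.succ) = 0) := by
      intro m
      rcases key m with h | h
      · constructor
        · intro h0; rw [h0, zero_mul] at h; exact absurd h (lt_irrefl 0)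
        · intro h0; rw [h0, mul_zero] at h; exact absurd h (lt_irrefl 0)
      · exact ⟨fun _ => h.2, fun _ => h.1⟩
    have hchain : ∀ i : Fin (k + 1), ((P k).eval (y i) = 0 ↔ (P k).eval (y 0) = 0) := by
      intro i
      induction i using Fin.induction with
      | zero => exact Iff.rfl
      | succ m ihm => rw [← ihm, hiff m]
    have hall : ∀ i : Fin (k + 1), (P k).eval (y i) = 0 := by
      intro i
      rw [hchain i, ← hchain i0]
      exact hi0
    have hinj : Set.InjOn y ↑(Finset.univ : Finset (Fin (k + 1))) :=
      fun i _ j _ h => hymono.injective h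
    have hsub : ∀ i ∈ (Finset.univ : Finset (Fin (k + 1))),
        y i ∈ (P k).roots.toFinset := by
      intro i _
      rw [Multiset.mem_toFinset, mem_roots hp0]
      exact hall i
    have hcard := Finset.card_le_card_of_injOn y hsub hinj
    have h1 : (Finset.univ : Finset (Fin (k + 1))).card = k + 1 := by simp
    have h2 : (P k).roots.toFinset.card ≤ Multiset.card (P k).roots :=
      Multiset.toFinset_card_le _
    have h3 : Multiset.card (P k).roots ≤ k := by
      have h4 := (P k).card_roots'
      rw [hPnat] at h4
      exact h4
    omega
  have haltern : ∀ m : Fin k, (P k).eval (y m.castSucc) * (P k).eval (y m.succ) < 0 :=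
    fun m => (key m).resolve_right fun h => hnz _ h.1
  -- roots of P k via factorization
  have hzero_iff : ∀ z : ℝ, (P k).eval z = 0 → ∃ j : Fin k, z = x j := by
    intro z hzv
    rw [hxfac] at hzv
    rw [Polynomial.eval_mul, Polynomial.eval_C, Polynomial.eval_prod] at hzv
    rcases mul_eq_zero.mp hzv with h | h
    · exact absurd h (hPlc k).ne'
    · obtain ⟨j, -, hj⟩ := Finset.prod_eq_zero_iff.mp h
      simp only [Polynomial.eval_sub, Polynomial.eval_X, Polynomial.eval_C] at hj
      exact ⟨j, sub_eq_zero.mp hj⟩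
  -- a root of P k in each interval
  have hx_in : ∀ m : Fin k, ∃ j : Fin k, x j ∈ Set.Ioo (y m.castSucc) (y m.succ) := by
    intro m
    have hlt : y m.castSucc < y m.succ := hymono (Fin.castSucc_lt_succ (i := m))
    have hcont : ContinuousOn (fun t => (P k).eval t)
        (Set.Icc (y m.castSucc) (y m.succ)) := (P k).continuous.continuousOn
    rcases mul_neg_iff.mp (haltern m) with ⟨hA, hB⟩ | ⟨hA, hB⟩
    · obtain ⟨z, hz, hfz⟩ := intermediate_value_Ioo' hlt.le hcont
        (Set.mem_Ioo.mpr ⟨hB, hA⟩)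
      obtain ⟨j, rfl⟩ := hzero_iff z hfz
      exact ⟨j, hz⟩
    · obtain ⟨z, hz, hfz⟩ := intermediate_value_Ioo hlt.le hcont
        (Set.mem_Ioo.mpr ⟨hA, hB⟩)
      obtain ⟨j, rfl⟩ := hzero_iff z hfz
      exact ⟨j, hz⟩
  choose σ hσ using hx_in
  -- σ is strictly monotone, hence the identity
  have hσmono : StrictMono σ := by
    intro m m' hmm'
    have h1 : x (σ m) < y m.succ := (hσ m).2
    have h2 : y m'.castSucc < x (σ m') := (hσ m').1
    have hle : (m.succ : Fin (k + 1)) ≤ m'.castSucc := by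
      rw [Fin.le_def, Fin.val_succ, Fin.coe_castSucc]
      exact Fin.lt_iff_val_lt_val.mp hmm'
    have h3 : y m.succ ≤ y m'.castSucc := hymono.monotone hle
    exact hxmono.lt_iff_lt.mp (by linarith)
  have hbij : Function.Bijective σ := Finite.injective_iff_bijective.mp hσmono.injective
  set e := Equiv.ofBijective σ hbij with he
  have happ : ∀ m, e m = σ m := fun m => rfl
  have hsymmono : StrictMono e.symm := by
    intro u v huv
    rcases lt_trichotomy (e.symm u) (e.symm v) with h | h | h
    · exact h
    · exfalso
      have : u = v := by
        rw [← e.apply_symm_apply u, ← e.apply_symm_apply v, h]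
      exact huv.ne this
    · exfalso
      have h4 := hσmono h
      rw [← happ, ← happ, e.apply_symm_apply, e.apply_symm_apply] at h4
      exact absurd huv (not_lt.mpr h4.le)
  haveI : WellFoundedLT (Fin k) := Finite.to_wellFoundedLT
  have hid : ∀ m, σ m = m := by
    intro m
    have h1 : m ≤ σ m := hσmono.le_apply
    have h2 : σ m ≤ m := by
      have h3 := hsymmono.le_apply (x := σ m)
      have h4 : e.symm (σ m) = m := by
        rw [← happ, e.symm_apply_apply]
      rw [h4] at h3
      exact h3
    exact le_antisymm h2 h1
  refine ⟨x, y, hxmono, hymono, hx1, hy1, hxfac, hyfac, fun m => ?_⟩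
  have h1 := (hσ m).1
  have h2 := (hσ m).2
  rw [hid m] at h1 h2
  exact ⟨h1, h2⟩
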